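/- Let f, g be bounded Borel-measurable real functions on a measurable space Z with g strictly positive, bounded above, and bounded away from zero. Let Z_1, ..., Z_k be i.i.d. with law ξ and ξ_k the empirical measure. With α = sup_{z',z''} |f(z')/g(z') − f(z'')/g(z'')| and β = sup_{z',z''} g(z')/g(z''), we have (E[|ξ_k(f)/ξ_k(g) − ξ(f)/ξ(g)|²])^{1/2} ≤ 2αβ/√k. -/

import Mathlib

open MeasureTheory ProbabilityTheory

lemma aux_bdd_integrable {Ω : Type*} [MeasurableSpace Ω] (P : Measure Ω)
    [IsProbabilityMeasure P] (v : Ω → ℝ) (hv : Measurable v) (M : ℝ)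
    (hM : ∀ ω, |v ω| ≤ M) : Integrable v P := by
  refine Integrable.mono' (integrable_const M) hv.aestronglyMeasurable ?_
  exact Filter.Eventually.of_forall fun ω => (by simpa using hM ω)

lemma aux_L1 {α Ω : Type*} [MeasurableSpace α] [MeasurableSpace Ω]
    (P : Measure Ω) [IsProbabilityMeasure P] (ξ : Measure α) [IsProbabilityMeasure ξ]
    (k : ℕ) (Z : Fin k → Ω → α) (hmeas : ∀ i, Measurable (Z i))
    (hindep : iIndepFun Z P)
    (hlaw : ∀ i, P.map (Z i) = ξ)
    (u : α → ℝ) (hu : Measurable u) (M : ℝ) (hM : ∀ z, |u z| ≤ M)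
    (h0 : ∫ z, u z ∂ξ = 0) :
    ∫ ω, (∑ i, u (Z i ω))^2 ∂P = k * ∫ z, u z ^ 2 ∂ξ := by
  have hne : Nonempty α := by
    by_contra h
    rw [not_nonempty_iff] at h
    have h1 := measure_univ (μ := ξ)
    rw [Set.univ_eq_empty_iff.mpr h, measure_empty] at h1
    exact zero_ne_one h1
  have hM0 : 0 ≤ M := le_trans (abs_nonneg _) (hM (Classical.ofNonempty))
  have hcomp : ∀ i, Measurable fun ω => u (Z i ω) := fun i => hu.comp (hmeas i)
  have hint : ∀ i j : Fin k, Integrable (fun ω => u (Z i ω) * u (Z j ω)) P := by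
    intro i j
    refine aux_bdd_integrable P _ ((hcomp i).mul (hcomp j)) (M * M) ?_
    intro ω; rw [abs_mul]; exact mul_le_mul (hM _) (hM _) (abs_nonneg _) hM0
  have hmap1 : ∀ i, ∫ ω, u (Z i ω) ∂P = 0 := by
    intro i
    rw [← h0, ← hlaw i, integral_map (hmeas i).aemeasurable hu.aestronglyMeasurable]
  have hmap2 : ∀ i, ∫ ω, u (Z i ω) ^ 2 ∂P = ∫ z, u z ^ 2 ∂ξ := by
    intro i
    rw [← hlaw i, integral_map (hmeas i).aemeasurable (hu.pow_const 2).aestronglyMeasurable]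
  have hoff : ∀ i j : Fin k, i ≠ j → ∫ ω, u (Z i ω) * u (Z j ω) ∂P = 0 := by
    intro i j hij
    have hind : IndepFun (fun ω => u (Z i ω)) (fun ω => u (Z j ω)) P :=
      (hindep.indepFun hij).comp hu hu
    rw [hind.integral_fun_mul_eq_mul_integral (hcomp i).aestronglyMeasurable (hcomp j).aestronglyMeasurable,
      hmap1 i, hmap1 j, mul_zero]
  calc ∫ ω, (∑ i, u (Z i ω)) ^ 2 ∂P
      = ∫ ω, ∑ i, ∑ j, u (Z i ω) * u (Z j ω) ∂P := by
        congr 1; funext ω; rw [sq, Finset.sum_mul_sum]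
    _ = ∑ i, ∑ j, ∫ ω, u (Z i ω) * u (Z j ω) ∂P := by
        rw [integral_finset_sum _ (fun i _ => integrable_finset_sum _ (fun j _ => hint i j))]
        exact Finset.sum_congr rfl fun i _ => integral_finset_sum _ fun j _ => hint i j
    _ = ∑ _i : Fin k, ∫ z, u z ^ 2 ∂ξ := by
        refine Finset.sum_congr rfl fun i _ => ?_
        rw [Finset.sum_eq_single i (fun j _ hj => hoff i j (Ne.symm hj)) (by simp)]
        rw [← hmap2 i]; congr 1; funext ω; ring
    _ = k * ∫ z, u z ^ 2 ∂ξ := by simp [Finset.sum_const, Finset.card_univ, nsmul_eq_mul]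

set_option maxHeartbeats 2000000 in
/-- Bias bound for the ratio of empirical integrals (Proposition 2.1, second ($L^2$) bound). -/
theorem stmt_1
    {α Ω : Type*} [MeasurableSpace α] [MeasurableSpace Ω]
    (P : Measure Ω) [IsProbabilityMeasure P]
    (ξ : Measure α) [IsProbabilityMeasure ξ]
    (k : ℕ) (hk : 1 ≤ k)
    (Z : Fin k → Ω → α)
    (hmeas : ∀ i, Measurable (Z i))
    (hindep : iIndepFun Z P)
    (hlaw : ∀ i, P.map (Z i) = ξ)
    (f g : α → ℝ) (hf : Measurable f) (hg : Measurable g)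
    (F c C : ℝ) (hF : ∀ z, |f z| ≤ F)
    (hc : 0 < c) (hgc : ∀ z, c ≤ g z) (hgC : ∀ z, g z ≤ C)
    (a b : ℝ)
    (ha : ∀ z z', |f z / g z - f z' / g z'| ≤ a)
    (hb : ∀ z z', g z / g z' ≤ b) :
    Real.sqrt (∫ ω, (((k : ℝ)⁻¹ * ∑ i, f (Z i ω)) / ((k : ℝ)⁻¹ * ∑ i, g (Z i ω))
      - (∫ z, f z ∂ξ) / (∫ z, g z ∂ξ)) ^ 2 ∂P)
      ≤ 2 * a * b / Real.sqrt k := by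
  -- basic positivity facts
  have hne : Nonempty α := by
    by_contra hemp
    rw [not_nonempty_iff] at hemp
    have h1 := measure_univ (μ := ξ)
    rw [Set.univ_eq_empty_iff.mpr hemp, measure_empty] at h1
    exact zero_ne_one h1
  obtain ⟨z₀⟩ := hne
  have hgpos : ∀ z, 0 < g z := fun z => lt_of_lt_of_le hc (hgc z)
  have ha0 : 0 ≤ a := by
    have := ha z₀ z₀
    rw [sub_self, abs_zero] at this
    exact this
  have hb1 : 1 ≤ b := by
    have := hb z₀ z₀
    rwa [div_self (ne_of_gt (hgpos z₀))] at this
  have hC0 : 0 < C := lt_of_lt_of_le (hgpos z₀) (hgC z₀)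
  have hkpos : (0:ℝ) < k := by exact_mod_cast Nat.lt_of_lt_of_le Nat.zero_lt_one hk
  have hkne : (k:ℝ) ≠ 0 := ne_of_gt hkpos
  -- integrability over ξ
  have intf : Integrable f ξ := aux_bdd_integrable ξ f hf F hF
  have intg : Integrable g ξ := aux_bdd_integrable ξ g hg C
    (fun z => by rw [abs_of_pos (hgpos z)]; exact hgC z)
  have intg2 : Integrable (fun z => g z ^ 2) ξ := by
    refine aux_bdd_integrable ξ _ (hg.pow_const 2) (C^2) (fun z => ?_)
    rw [abs_of_nonneg (sq_nonneg _)]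
    exact pow_le_pow_left₀ (le_of_lt (hgpos z)) (hgC z) 2
  set ξf := ∫ z, f z ∂ξ with hξfdef
  set ξg := ∫ z, g z ∂ξ with hξgdef
  have hξgc : c ≤ ξg := by
    rw [hξgdef]
    calc c = ∫ _z, c ∂ξ := by simp
    _ ≤ ∫ z, g z ∂ξ := integral_mono (integrable_const c) intg hgc
  have hξgpos : 0 < ξg := lt_of_lt_of_le hc hξgc
  have hξgne : ξg ≠ 0 := ne_of_gt hξgpos
  set r := ξf / ξg with hrdef
  set h : α → ℝ := fun z => f z - r * g z with hhdef
  have hhmeas : Measurable h := hf.sub (hg.const_mul r)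
  -- pointwise bound on g by b * ξg
  have hgb : ∀ z, g z ≤ b * ξg := by
    intro z
    have h1 : ∀ z', g z ≤ b * g z' := fun z' => (div_le_iff₀ (hgpos z')).mp (hb z z')
    calc g z = ∫ _z', g z ∂ξ := by simp
    _ ≤ ∫ z', b * g z' ∂ξ := integral_mono (integrable_const _) (intg.const_mul b) h1
    _ = b * ξg := by rw [integral_const_mul]
  -- second moment of g
  have hgsq : ∫ z, g z ^ 2 ∂ξ ≤ b * ξg ^ 2 := by
    calc ∫ z, g z ^ 2 ∂ξ ≤ ∫ z, (b * ξg) * g z ∂ξ := by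
          refine integral_mono intg2 (intg.const_mul _) (fun z => ?_)
          rw [sq]
          exact mul_le_mul_of_nonneg_right (hgb z) (le_of_lt (hgpos z))
    _ = b * ξg ^ 2 := by rw [integral_const_mul]; ring
  -- key bound |h z| ≤ a * g z
  have hha : ∀ z, |h z| ≤ a * g z := by
    intro z
    have e1 : f z * ξg - ξf * g z = ∫ z', (f z * g z' - f z' * g z) ∂ξ := by
      rw [integral_sub (intg.const_mul (f z)) (intf.mul_const (g z)),
        integral_const_mul, integral_mul_const]
    have ptw : ∀ z', |f z * g z' - f z' * g z| ≤ (a * g z) * g z' := by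
      intro z'
      have hdd : f z / g z - f z' / g z' = (f z * g z' - f z' * g z) / (g z * g z') := by
        rw [div_sub_div _ _ (ne_of_gt (hgpos z)) (ne_of_gt (hgpos z'))]
        ring_nf
      have hpos : 0 < g z * g z' := mul_pos (hgpos z) (hgpos z')
      have habs : |f z * g z' - f z' * g z| = |f z / g z - f z' / g z'| * (g z * g z') := by
        rw [hdd, abs_div, abs_of_pos hpos, div_mul_cancel₀ _ (ne_of_gt hpos)]
      rw [habs]
      calc |f z / g z - f z' / g z'| * (g z * g z') ≤ a * (g z * g z') :=
            mul_le_mul_of_nonneg_right (ha z z') (le_of_lt hpos)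
      _ = (a * g z) * g z' := by ring
    have e2 : |f z * ξg - ξf * g z| ≤ (a * g z) * ξg := by
      rw [e1]
      calc |∫ z', (f z * g z' - f z' * g z) ∂ξ| ≤ ∫ z', |f z * g z' - f z' * g z| ∂ξ := by
            simpa [Real.norm_eq_abs] using
              norm_integral_le_integral_norm (fun z' => f z * g z' - f z' * g z) (μ := ξ)
      _ ≤ ∫ z', (a * g z) * g z' ∂ξ := by
            refine integral_mono ?_ (intg.const_mul _) ptw
            exact ((intg.const_mul (f z)).sub (intf.mul_const (g z))).abs
      _ = (a * g z) * ξg := by rw [integral_const_mul]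
    have e3 : h z = (f z * ξg - ξf * g z) / ξg := by
      rw [hhdef]; simp only []
      rw [hrdef]; field_simp
    rw [e3, abs_div, abs_of_pos hξgpos, div_le_iff₀ hξgpos]
    exact e2
  have hξh : ∫ z, h z ∂ξ = 0 := by
    rw [hhdef]
    rw [integral_sub intf (intg.const_mul r), integral_const_mul, ← hξfdef, ← hξgdef,
      hrdef, div_mul_cancel₀ _ hξgne, sub_self]
  have hhC : ∀ z, |h z| ≤ a * C :=
    fun z => le_trans (hha z) (mul_le_mul_of_nonneg_left (hgC z) ha0)
  have inth2 : ∫ z, h z ^ 2 ∂ξ ≤ a ^ 2 * (b * ξg ^ 2) := by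
    have step : ∫ z, h z ^ 2 ∂ξ ≤ a ^ 2 * ∫ z, g z ^ 2 ∂ξ := by
      rw [← integral_const_mul]
      refine integral_mono ?_ (intg2.const_mul _) (fun z => ?_)
      · refine aux_bdd_integrable ξ _ (hhmeas.pow_const 2) ((a*C)^2) (fun z => ?_)
        rw [abs_of_nonneg (sq_nonneg _), ← sq_abs]
        exact pow_le_pow_left₀ (abs_nonneg _) (hhC z) 2
      · calc h z ^ 2 = |h z| ^ 2 := (sq_abs _).symm
        _ ≤ (a * g z) ^ 2 := pow_le_pow_left₀ (abs_nonneg _) (hha z) 2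
        _ = a ^ 2 * g z ^ 2 := by ring
    exact le_trans step (mul_le_mul_of_nonneg_left hgsq (sq_nonneg a))
  -- empirical averages
  have mSf : Measurable fun ω => (k:ℝ)⁻¹ * ∑ i, f (Z i ω) :=
    (Finset.measurable_sum Finset.univ fun i _ => hf.comp (hmeas i)).const_mul _
  have mSg : Measurable fun ω => (k:ℝ)⁻¹ * ∑ i, g (Z i ω) :=
    (Finset.measurable_sum Finset.univ fun i _ => hg.comp (hmeas i)).const_mul _
  have mSh : Measurable fun ω => (k:ℝ)⁻¹ * ∑ i, h (Z i ω) :=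
    (Finset.measurable_sum Finset.univ fun i _ => hhmeas.comp (hmeas i)).const_mul _
  have hSgc : ∀ ω, c ≤ (k:ℝ)⁻¹ * ∑ i, g (Z i ω) := by
    intro ω
    have h1 : (k:ℝ) * c ≤ ∑ i, g (Z i ω) := by
      calc (k:ℝ) * c = ∑ _i : Fin k, c := by
            simp [Finset.sum_const, Finset.card_univ, nsmul_eq_mul]
      _ ≤ ∑ i, g (Z i ω) := Finset.sum_le_sum fun i _ => hgc _
    calc c = (k:ℝ)⁻¹ * ((k:ℝ) * c) := by field_simp
    _ ≤ (k:ℝ)⁻¹ * ∑ i, g (Z i ω) :=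
        mul_le_mul_of_nonneg_left h1 (inv_nonneg.mpr (le_of_lt hkpos))
  have hSgpos : ∀ ω, 0 < (k:ℝ)⁻¹ * ∑ i, g (Z i ω) := fun ω => lt_of_lt_of_le hc (hSgc ω)
  have hSgC : ∀ ω, (k:ℝ)⁻¹ * ∑ i, g (Z i ω) ≤ C := by
    intro ω
    have h1 : ∑ i, g (Z i ω) ≤ (k:ℝ) * C := by
      calc ∑ i, g (Z i ω) ≤ ∑ _i : Fin k, C := Finset.sum_le_sum fun i _ => hgC _
      _ = (k:ℝ) * C := by simp [Finset.sum_const, Finset.card_univ, nsmul_eq_mul]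
    calc (k:ℝ)⁻¹ * ∑ i, g (Z i ω) ≤ (k:ℝ)⁻¹ * ((k:ℝ) * C) :=
          mul_le_mul_of_nonneg_left h1 (inv_nonneg.mpr (le_of_lt hkpos))
    _ = C := by field_simp
  have hShbd : ∀ ω, |(k:ℝ)⁻¹ * ∑ i, h (Z i ω)| ≤ a * ((k:ℝ)⁻¹ * ∑ i, g (Z i ω)) := by
    intro ω
    rw [abs_mul, abs_of_nonneg (inv_nonneg.mpr (le_of_lt hkpos))]
    have h1 : |∑ i, h (Z i ω)| ≤ ∑ i, a * g (Z i ω) :=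
      le_trans (Finset.abs_sum_le_sum_abs _ _) (Finset.sum_le_sum fun i _ => hha _)
    calc (k:ℝ)⁻¹ * |∑ i, h (Z i ω)| ≤ (k:ℝ)⁻¹ * ∑ i, a * g (Z i ω) :=
          mul_le_mul_of_nonneg_left h1 (inv_nonneg.mpr (le_of_lt hkpos))
    _ = a * ((k:ℝ)⁻¹ * ∑ i, g (Z i ω)) := by rw [← Finset.mul_sum]; ring
  have hShC : ∀ ω, |(k:ℝ)⁻¹ * ∑ i, h (Z i ω)| ≤ a * C :=
    fun ω => le_trans (hShbd ω) (mul_le_mul_of_nonneg_left (hSgC ω) ha0)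
  -- pointwise identity: the integrand equals (Sh/Sg)^2
  have hident : ∀ ω,
      ((k:ℝ)⁻¹ * ∑ i, f (Z i ω)) / ((k:ℝ)⁻¹ * ∑ i, g (Z i ω)) - r
        = ((k:ℝ)⁻¹ * ∑ i, h (Z i ω)) / ((k:ℝ)⁻¹ * ∑ i, g (Z i ω)) := by
    intro ω
    have hsub : (k:ℝ)⁻¹ * ∑ i, h (Z i ω)
        = ((k:ℝ)⁻¹ * ∑ i, f (Z i ω)) - r * ((k:ℝ)⁻¹ * ∑ i, g (Z i ω)) := by
      rw [hhdef]
      simp only [Finset.sum_sub_distrib, ← Finset.mul_sum]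
      ring
    rw [hsub, sub_div, mul_div_cancel_right₀ _ (ne_of_gt (hSgpos ω))]
  -- pointwise ratio bound
  have hratio : ∀ ω,
      |((k:ℝ)⁻¹ * ∑ i, h (Z i ω)) / ((k:ℝ)⁻¹ * ∑ i, g (Z i ω))| ≤ a := by
    intro ω
    rw [abs_div, abs_of_pos (hSgpos ω), div_le_iff₀ (hSgpos ω)]
    exact hShbd ω
  -- pointwise quadratic bound
  have hptw : ∀ ω,
      (((k:ℝ)⁻¹ * ∑ i, f (Z i ω)) / ((k:ℝ)⁻¹ * ∑ i, g (Z i ω)) - r) ^ 2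
        ≤ (2 / ξg ^ 2) * ((k:ℝ)⁻¹ * ∑ i, h (Z i ω)) ^ 2
          + (2 * a ^ 2 / ξg ^ 2) * (((k:ℝ)⁻¹ * ∑ i, g (Z i ω)) - ξg) ^ 2 := by
    intro ω
    rw [hident ω]
    have hratioω := hratio ω
    set s := (k:ℝ)⁻¹ * ∑ i, g (Z i ω) with hs
    set t := (k:ℝ)⁻¹ * ∑ i, h (Z i ω) with ht
    have hspos : 0 < s := hSgpos ω
    set q := t / s with hqdef
    have hqa : q ^ 2 ≤ a ^ 2 := by
      rw [← sq_abs]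
      exact pow_le_pow_left₀ (abs_nonneg _) hratioω 2
    have e : t = q * s := by
      rw [hqdef, div_mul_cancel₀ _ (ne_of_gt hspos)]
    rw [e]
    have hξ2 : (0:ℝ) < ξg ^ 2 := by positivity
    have h2 : q ^ 2 * ξg ^ 2 ≤ 2 * (q * s) ^ 2 + 2 * a ^ 2 * (s - ξg) ^ 2 := by
      nlinarith [hqa, sq_nonneg (q * (2 * s - ξg)), sq_nonneg (s - ξg),
        mul_le_mul_of_nonneg_right hqa (sq_nonneg (s - ξg))]
    calc q ^ 2 = (q ^ 2 * ξg ^ 2) / ξg ^ 2 := by field_simp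
      _ ≤ (2 * (q * s) ^ 2 + 2 * a ^ 2 * (s - ξg) ^ 2) / ξg ^ 2 :=
          (div_le_div_iff_of_pos_right hξ2).mpr h2
      _ = (2 / ξg ^ 2) * (q * s) ^ 2 + (2 * a ^ 2 / ξg ^ 2) * (s - ξg) ^ 2 := by
          ring
  -- integrability over P
  have intLHS : Integrable (fun ω =>
      (((k:ℝ)⁻¹ * ∑ i, f (Z i ω)) / ((k:ℝ)⁻¹ * ∑ i, g (Z i ω)) - r) ^ 2) P := by
    refine aux_bdd_integrable P _ (((mSf.div mSg).sub measurable_const).pow_const 2)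
      (a ^ 2) (fun ω => ?_)
    rw [abs_of_nonneg (sq_nonneg _), hident ω, ← sq_abs]
    exact pow_le_pow_left₀ (abs_nonneg _) (hratio ω) 2
  have intSh2 : Integrable (fun ω => ((k:ℝ)⁻¹ * ∑ i, h (Z i ω)) ^ 2) P := by
    refine aux_bdd_integrable P _ (mSh.pow_const 2) ((a*C) ^ 2) (fun ω => ?_)
    rw [abs_of_nonneg (sq_nonneg _), ← sq_abs]
    exact pow_le_pow_left₀ (abs_nonneg _) (hShC ω) 2
  have intSg2 : Integrable (fun ω => (((k:ℝ)⁻¹ * ∑ i, g (Z i ω)) - ξg) ^ 2) P := by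
    refine aux_bdd_integrable P _ ((mSg.sub measurable_const).pow_const 2)
      ((C + |ξg|) ^ 2) (fun ω => ?_)
    rw [abs_of_nonneg (sq_nonneg _), ← sq_abs]
    refine pow_le_pow_left₀ (abs_nonneg _) ?_ 2
    calc |((k:ℝ)⁻¹ * ∑ i, g (Z i ω)) - ξg| ≤ |(k:ℝ)⁻¹ * ∑ i, g (Z i ω)| + |ξg| :=
          abs_sub _ _
    _ ≤ C + |ξg| := by
        have := hSgC ω
        have h0 := hSgpos ω
        rw [abs_of_pos h0]
        linarith
  -- second moments via aux_L1
  have momSh : ∫ ω, ((k:ℝ)⁻¹ * ∑ i, h (Z i ω)) ^ 2 ∂P = (∫ z, h z ^ 2 ∂ξ) / k := by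
    have e : ∀ ω, ((k:ℝ)⁻¹ * ∑ i, h (Z i ω)) ^ 2
        = ((k:ℝ)⁻¹) ^ 2 * (∑ i, h (Z i ω)) ^ 2 := fun ω => mul_pow _ _ _
    calc ∫ ω, ((k:ℝ)⁻¹ * ∑ i, h (Z i ω)) ^ 2 ∂P
        = ∫ ω, ((k:ℝ)⁻¹) ^ 2 * (∑ i, h (Z i ω)) ^ 2 ∂P := by
          exact integral_congr_ae (Filter.Eventually.of_forall fun ω => e ω)
      _ = ((k:ℝ)⁻¹) ^ 2 * ∫ ω, (∑ i, h (Z i ω)) ^ 2 ∂P := integral_const_mul _ _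
      _ = ((k:ℝ)⁻¹) ^ 2 * ((k:ℝ) * ∫ z, h z ^ 2 ∂ξ) := by
          rw [aux_L1 P ξ k Z hmeas hindep hlaw h hhmeas (a*C) hhC hξh]
      _ = (∫ z, h z ^ 2 ∂ξ) / k := by field_simp
  have hgshift : ∀ z, |g z - ξg| ≤ C + |ξg| := by
    intro z
    calc |g z - ξg| ≤ |g z| + |ξg| := abs_sub _ _
    _ ≤ C + |ξg| := by
        rw [abs_of_pos (hgpos z)]
        exact add_le_add_left (hgC z) _
  have hgshift0 : ∫ z, (g z - ξg) ∂ξ = 0 := by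
    rw [integral_sub intg (integrable_const _)]
    simp [hξgdef]
  have hgshiftsq : ∫ z, (g z - ξg) ^ 2 ∂ξ ≤ b * ξg ^ 2 := by
    have e : ∀ z, (g z - ξg) ^ 2 = g z ^ 2 - (2 * ξg) * g z + ξg ^ 2 := by
      intro z; ring
    have e2 : ∫ z, (g z - ξg) ^ 2 ∂ξ = (∫ z, g z ^ 2 ∂ξ) - ξg ^ 2 := by
      calc ∫ z, (g z - ξg) ^ 2 ∂ξ
          = ∫ z, (g z ^ 2 - (2 * ξg) * g z + ξg ^ 2) ∂ξ :=
            integral_congr_ae (Filter.Eventually.of_forall fun z => e z)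
        _ = (∫ z, (g z ^ 2 - (2 * ξg) * g z) ∂ξ) + ξg ^ 2 := by
            have i1 : Integrable (fun z => g z ^ 2 - (2 * ξg) * g z) ξ :=
              intg2.sub (intg.const_mul _)
            rw [integral_add i1 (integrable_const _)]
            simp
        _ = (∫ z, g z ^ 2 ∂ξ) - (2 * ξg) * ξg + ξg ^ 2 := by
            have i2 : Integrable (fun z => (2 * ξg) * g z) ξ := intg.const_mul _
            rw [integral_sub intg2 i2, integral_const_mul, ← hξgdef]
        _ = (∫ z, g z ^ 2 ∂ξ) - ξg ^ 2 := by ring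
    rw [e2]
    have := hgsq
    nlinarith [sq_nonneg ξg]
  have momSg : ∫ ω, (((k:ℝ)⁻¹ * ∑ i, g (Z i ω)) - ξg) ^ 2 ∂P
      = (∫ z, (g z - ξg) ^ 2 ∂ξ) / k := by
    have e : ∀ ω, ((k:ℝ)⁻¹ * ∑ i, g (Z i ω)) - ξg
        = (k:ℝ)⁻¹ * ∑ i, (g (Z i ω) - ξg) := by
      intro ω
      rw [Finset.sum_sub_distrib, Finset.sum_const, Finset.card_univ, Fintype.card_fin,
        nsmul_eq_mul, mul_sub]
      field_simp
    calc ∫ ω, (((k:ℝ)⁻¹ * ∑ i, g (Z i ω)) - ξg) ^ 2 ∂P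
        = ∫ ω, ((k:ℝ)⁻¹) ^ 2 * (∑ i, (g (Z i ω) - ξg)) ^ 2 ∂P := by
          refine integral_congr_ae (Filter.Eventually.of_forall fun ω => ?_)
          simp only [e ω, mul_pow]
      _ = ((k:ℝ)⁻¹) ^ 2 * ∫ ω, (∑ i, (g (Z i ω) - ξg)) ^ 2 ∂P := integral_const_mul _ _
      _ = ((k:ℝ)⁻¹) ^ 2 * ((k:ℝ) * ∫ z, (g z - ξg) ^ 2 ∂ξ) := by
          rw [aux_L1 P ξ k Z hmeas hindep hlaw (fun z => g z - ξg)
            (hg.sub measurable_const) (C + |ξg|) hgshift hgshift0]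
      _ = (∫ z, (g z - ξg) ^ 2 ∂ξ) / k := by field_simp
  -- main integral bound
  have main : ∫ ω, (((k:ℝ)⁻¹ * ∑ i, f (Z i ω)) / ((k:ℝ)⁻¹ * ∑ i, g (Z i ω)) - r) ^ 2 ∂P
      ≤ (2 * a * b) ^ 2 / k := by
    have step1 : ∫ ω, (((k:ℝ)⁻¹ * ∑ i, f (Z i ω)) / ((k:ℝ)⁻¹ * ∑ i, g (Z i ω)) - r) ^ 2 ∂P
        ≤ ∫ ω, ((2 / ξg ^ 2) * ((k:ℝ)⁻¹ * ∑ i, h (Z i ω)) ^ 2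
            + (2 * a ^ 2 / ξg ^ 2) * (((k:ℝ)⁻¹ * ∑ i, g (Z i ω)) - ξg) ^ 2) ∂P :=
      integral_mono intLHS ((intSh2.const_mul _).add (intSg2.const_mul _)) hptw
    have step2 : ∫ ω, ((2 / ξg ^ 2) * ((k:ℝ)⁻¹ * ∑ i, h (Z i ω)) ^ 2
            + (2 * a ^ 2 / ξg ^ 2) * (((k:ℝ)⁻¹ * ∑ i, g (Z i ω)) - ξg) ^ 2) ∂P
        = (2 / ξg ^ 2) * ((∫ z, h z ^ 2 ∂ξ) / k)
          + (2 * a ^ 2 / ξg ^ 2) * ((∫ z, (g z - ξg) ^ 2 ∂ξ) / k) := by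
      rw [integral_add (intSh2.const_mul _) (intSg2.const_mul _),
        integral_const_mul, integral_const_mul, momSh, momSg]
    have step3 : (2 / ξg ^ 2) * ((∫ z, h z ^ 2 ∂ξ) / k)
          + (2 * a ^ 2 / ξg ^ 2) * ((∫ z, (g z - ξg) ^ 2 ∂ξ) / k)
        ≤ (2 * a * b) ^ 2 / k := by
      have hbb : b ≤ b ^ 2 := by nlinarith
      have f1 : 2 * a ^ 2 * (∫ z, (g z - ξg) ^ 2 ∂ξ) ≤ 2 * a ^ 2 * (b * ξg ^ 2) := by
        refine mul_le_mul_of_nonneg_left hgshiftsq (by positivity)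
      have key : 2 * (∫ z, h z ^ 2 ∂ξ) + 2 * a ^ 2 * (∫ z, (g z - ξg) ^ 2 ∂ξ)
          ≤ 4 * a ^ 2 * b ^ 2 * ξg ^ 2 := by
        nlinarith [inth2, f1, mul_nonneg (mul_nonneg (sq_nonneg a) (sq_nonneg ξg))
          (sub_nonneg.mpr hbb)]
      have expand : (2 / ξg ^ 2) * ((∫ z, h z ^ 2 ∂ξ) / k)
            + (2 * a ^ 2 / ξg ^ 2) * ((∫ z, (g z - ξg) ^ 2 ∂ξ) / k)
          = (2 * (∫ z, h z ^ 2 ∂ξ) + 2 * a ^ 2 * (∫ z, (g z - ξg) ^ 2 ∂ξ))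
            / (ξg ^ 2 * k) := by
        field_simp
        try ring
      have expand2 : (2 * a * b) ^ 2 / (k:ℝ) = (4 * a ^ 2 * b ^ 2 * ξg ^ 2) / (ξg ^ 2 * k) := by
        field_simp
        ring
      rw [expand, expand2]
      exact (div_le_div_iff_of_pos_right (by positivity)).mpr key
    exact le_trans step1 (le_trans (le_of_eq step2) step3)
  calc Real.sqrt (∫ ω, (((k:ℝ)⁻¹ * ∑ i, f (Z i ω)) / ((k:ℝ)⁻¹ * ∑ i, g (Z i ω)) - r) ^ 2 ∂P)
      ≤ Real.sqrt ((2 * a * b) ^ 2 / k) := Real.sqrt_le_sqrt main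
    _ = 2 * a * b / Real.sqrt k := by
        rw [Real.sqrt_div (sq_nonneg _), Real.sqrt_sq
          (mul_nonneg (mul_nonneg (by norm_num) ha0) (le_trans zero_le_one hb1))]
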